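/- For all real numbers x, y with 0 < x < y < 1, y^y > x^x · (y-x)^(y-x). -/
import Mathlib

open Real

/-- For all real `x`, `y` with `0 < x < y < 1`, we have `y^y > x^x * (y-x)^(y-x)`,
where powers are real powers (`exp (a * ln a)` for positive base). -/
theorem rpow_self_gt_mul {x y : ℝ} (hx : 0 < x) (hxy : x < y) (hy : y < 1) :
    x ^ x * (y - x) ^ (y - x) < y ^ y := by
  have hyx : 0 < y - x := by linarith
  have h1 : x ^ x < y ^ x := Real.rpow_lt_rpow hx.le hxy hx
  have h2 : (y - x) ^ (y - x) < y ^ (y - x) :=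
    Real.rpow_lt_rpow hyx.le (by linarith) hyx
  calc x ^ x * (y - x) ^ (y - x) < y ^ x * y ^ (y - x) := by
        apply mul_lt_mul' h1.le h2 (Real.rpow_nonneg hyx.le _)
        exact Real.rpow_pos_of_pos (by linarith) _
    _ = y ^ y := by
        rw [← Real.rpow_add (by linarith)]; ring_nf
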